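/- Let F be the free group on generators a₁, …, aₙ, b (n ≥ 1), R the normal closure in F of {a₁, …, aₙ} ∪ [F,F], and S the normal closure in F of {a₁², …, aₙ², b} ∪ [F,F]. Then for every i = 1, …, n, the element [aᵢ,b]² lies in R'·S'. -/

import Mathlib

/-- The free group on generators `a₁, …, aₙ, b`. -/
abbrev FG (n : ℕ) := FreeGroup (Fin n ⊕ Unit)

/-- The generators `a i`. -/
def agen (n : ℕ) (i : Fin n) : FG n := FreeGroup.of (Sum.inl i)

/-- The generator `b`. -/
def bgen (n : ℕ) : FG n := FreeGroup.of (Sum.inr ())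

/-- `R`, the normal closure of `{a₁, …, aₙ} ∪ [F,F]` in `F`. -/
abbrev Rsub (n : ℕ) : Subgroup (FG n) :=
  Subgroup.normalClosure (Set.range (agen n) ∪ (commutator (FG n) : Set (FG n)))

/-- `S`, the normal closure of `{a₁², …, aₙ², b} ∪ [F,F]` in `F`. -/
abbrev Ssub (n : ℕ) : Subgroup (FG n) :=
  Subgroup.normalClosure
    ((Set.range fun i => agen n i ^ 2) ∪ {bgen n} ∪ (commutator (FG n) : Set (FG n)))

open scoped commutatorElement

theorem stmt15 (n : ℕ) (hn : 1 ≤ n) (i : Fin n) :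
    ((agen n i)⁻¹ * (bgen n)⁻¹ * agen n i * bgen n) ^ 2 ∈
      ⁅Rsub n, Rsub n⁆ ⊔ ⁅Ssub n, Ssub n⁆ := by
  set a := agen n i with ha
  set b := bgen n with hb
  set c : FG n := ⁅a⁻¹, b⁻¹⁆ with hc
  have haR : a ∈ Rsub n := Subgroup.subset_normalClosure (Or.inl ⟨i, rfl⟩)
  have hcF : c ∈ commutator (FG n) := by
    rw [commutator_def]
    exact Subgroup.commutator_mem_commutator (Subgroup.mem_top a⁻¹) (Subgroup.mem_top b⁻¹)
  have hcR : c ∈ Rsub n := Subgroup.subset_normalClosure (Or.inr hcF)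
  have ha2S : a ^ 2 ∈ Ssub n :=
    Subgroup.subset_normalClosure (Or.inl (Or.inl ⟨i, rfl⟩))
  have hbS : b ∈ Ssub n := Subgroup.subset_normalClosure (Or.inl (Or.inr rfl))
  have h1 : ⁅(a ^ 2)⁻¹, b⁻¹⁆ ∈ ⁅Ssub n, Ssub n⁆ :=
    Subgroup.commutator_mem_commutator (inv_mem ha2S) (inv_mem hbS)
  have h2 : ⁅c⁻¹, a⁻¹⁆ ∈ ⁅Rsub n, Rsub n⁆ :=
    Subgroup.commutator_mem_commutator (inv_mem hcR) (inv_mem haR)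
  have h3 : c⁻¹ * ⁅c⁻¹, a⁻¹⁆ * c ∈ ⁅Rsub n, Rsub n⁆ := by
    have := (Subgroup.commutator_normal (Rsub n) (Rsub n)).conj_mem _ h2 c⁻¹
    simpa using this
  have key : (a⁻¹ * b⁻¹ * a * b) ^ 2 =
      ⁅(a ^ 2)⁻¹, b⁻¹⁆ * (c⁻¹ * ⁅c⁻¹, a⁻¹⁆ * c)⁻¹ := by
    simp only [hc, commutatorElement_def]
    group
    rw [zpow_two]
    group
  rw [key]
  have hleS : ⁅Ssub n, Ssub n⁆ ≤ ⁅Rsub n, Rsub n⁆ ⊔ ⁅Ssub n, Ssub n⁆ := le_sup_right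
  have hleR : ⁅Rsub n, Rsub n⁆ ≤ ⁅Rsub n, Rsub n⁆ ⊔ ⁅Ssub n, Ssub n⁆ := le_sup_left
  exact mul_mem (hleS h1) (inv_mem (hleR h3))
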